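/- With ℰ_v(n,k) as defined, for every v ≥ 0 and n ≥ 1 one has ℰ_v(n,0) = (Γ(v-3/2) Γ(v+3/2)) / ((2v+1)! · 2^{v+1} · π) · 𝒫_v(8n - 1), where 𝒫_v(x) = Σ_{r=0}^{v} (-1)^r C(2v+1,2r) (2r-3)(2r-1) x^r. -/

import Mathlib

/-- The quantity `ℰ_v(n,k)` from the paper:
`Σ_{r+s=v} ((-1)^r/8^v) Γ(v-3/2)Γ(v+3/2)/(s! r! Γ(r-3/2) Γ(s+3/2))
   (2k+1)^{2s+1} (8n-(2k+1)²)^r`. -/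
noncomputable def Ecal (v n k : ℕ) : ℝ :=
  ∑ r ∈ Finset.range (v + 1),
    ((-1 : ℝ) ^ r / 8 ^ v) *
      (Real.Gamma ((v : ℝ) - 3 / 2) * Real.Gamma ((v : ℝ) + 3 / 2)) /
      ((Nat.factorial (v - r) : ℝ) * (Nat.factorial r : ℝ) *
        Real.Gamma ((r : ℝ) - 3 / 2) * Real.Gamma (((v - r : ℕ) : ℝ) + 3 / 2)) *
      (2 * (k : ℝ) + 1) ^ (2 * (v - r) + 1) *
      (8 * (n : ℝ) - (2 * (k : ℝ) + 1) ^ 2) ^ r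


open Real in
lemma Gamma_half_plus (s : ℕ) :
    Real.Gamma ((s : ℝ) + 3 / 2) =
      (Nat.factorial (2 * s + 1) : ℝ) * √π / (2 * 4 ^ s * (Nat.factorial s : ℝ)) := by
  induction s with
  | zero =>
      have h : ((0 : ℕ) : ℝ) + 3 / 2 = 1 / 2 + 1 := by norm_num
      rw [h, Real.Gamma_add_one (by norm_num), Real.Gamma_one_half_eq]
      norm_num
      ring
  | succ s ih =>
      have h : ((s + 1 : ℕ) : ℝ) + 3 / 2 = ((s : ℝ) + 3 / 2) + 1 := by push_cast; ring
      rw [h, Real.Gamma_add_one (by positivity), ih]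
      have h2 : (2 * (s + 1) + 1) = (2 * s + 1) + 1 + 1 := by ring
      rw [h2, Nat.factorial_succ (2 * s + 1 + 1), Nat.factorial_succ (2 * s + 1), Nat.factorial_succ s]
      have hs : (Nat.factorial s : ℝ) ≠ 0 := by positivity
      push_cast
      field_simp
      ring

lemma odd_cast_ne {r : ℕ} {c : ℝ} (hc : ∀ m : ℕ, (2 * (m:ℝ) : ℝ) - c ≠ 0 → True) : True := trivial

lemma two_mul_sub_ne_three (r : ℕ) : 2 * (r : ℝ) - 3 ≠ 0 := by
  intro hc
  have h3 : ((2 * r : ℕ) : ℝ) = ((3 : ℕ) : ℝ) := by push_cast; linarith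
  have := Nat.cast_inj (R := ℝ) |>.mp h3
  omega

lemma two_mul_sub_ne_one (r : ℕ) : 2 * (r : ℝ) - 1 ≠ 0 := by
  intro hc
  have h3 : ((2 * r : ℕ) : ℝ) = ((1 : ℕ) : ℝ) := by push_cast; linarith
  have := Nat.cast_inj (R := ℝ) |>.mp h3
  omega

open Real in
lemma Gamma_half_minus (r : ℕ) :
    Real.Gamma ((r : ℝ) - 3 / 2) =
      4 * (Nat.factorial (2 * r) : ℝ) * √π /
        (4 ^ r * (Nat.factorial r : ℝ) * ((2 * (r : ℝ) - 3) * (2 * (r : ℝ) - 1))) := by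
  induction r with
  | zero =>
      have h1 : Real.Gamma (1 / 2) = (-(1:ℝ)/2) * ((-(3:ℝ)/2) * Real.Gamma (-(3:ℝ)/2)) := by
        have e1 : (1 : ℝ) / 2 = (-(1:ℝ)/2) + 1 := by norm_num
        have e2 : (-(1 : ℝ)) / 2 = (-(3:ℝ)/2) + 1 := by norm_num
        rw [e1, Real.Gamma_add_one (by norm_num), e2, Real.Gamma_add_one (by norm_num)]
      have h2 : ((0 : ℕ) : ℝ) - 3 / 2 = -(3:ℝ)/2 := by norm_num
      rw [h2]
      rw [Real.Gamma_one_half_eq] at h1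
      norm_num at h1 ⊢
      linarith
  | succ r ih =>
      have hne : (r : ℝ) - 3 / 2 ≠ 0 := by
        intro hc
        have h3 : ((2 * r : ℕ) : ℝ) = ((3 : ℕ) : ℝ) := by push_cast; linarith
        have := Nat.cast_inj (R := ℝ) |>.mp h3
        omega
      have h : ((r + 1 : ℕ) : ℝ) - 3 / 2 = ((r : ℝ) - 3 / 2) + 1 := by push_cast; ring
      have hf : 2 * (r + 1) = (2 * r) + 1 + 1 := by ring
      rw [h, Real.Gamma_add_one hne, ih, hf, Nat.factorial_succ, Nat.factorial_succ,
        Nat.factorial_succ r]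
      have h1 := two_mul_sub_ne_three r
      have h2 := two_mul_sub_ne_one r
      have h3 := two_mul_sub_ne_three (r + 1)
      have h4 := two_mul_sub_ne_one (r + 1)
      have hr : (Nat.factorial r : ℝ) ≠ 0 := by positivity
      have h2r : (Nat.factorial (2 * r) : ℝ) ≠ 0 := by positivity
      push_cast at h3 h4 ⊢
      field_simp
      rw [div_eq_iff (by rw [mul_comm (r : ℝ) 2]; exact mul_ne_zero h1 h2)]
      ring


set_option maxHeartbeats 1600000 in
open Real in
theorem Ecal_n_zero_eq (v : ℕ) (n : ℕ) (hn : 1 ≤ n) :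
    Ecal v n 0 =
      Real.Gamma ((v : ℝ) - 3 / 2) * Real.Gamma ((v : ℝ) + 3 / 2) /
        ((Nat.factorial (2 * v + 1) : ℝ) * 2 ^ (v + 1) * π) *
      ∑ r ∈ Finset.range (v + 1),
        (-1 : ℝ) ^ r * (Nat.choose (2 * v + 1) (2 * r) : ℝ) *
          (2 * (r : ℝ) - 3) * (2 * (r : ℝ) - 1) * (8 * (n : ℝ) - 1) ^ r := by
  unfold Ecal
  rw [Finset.mul_sum]
  refine Finset.sum_congr rfl fun r hr => ?_
  rw [Finset.mem_range, Nat.lt_succ_iff] at hr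
  obtain ⟨s, rfl⟩ := Nat.exists_eq_add_of_le hr
  have hvr : r + s - r = s := by omega
  rw [hvr, Gamma_half_minus r, Gamma_half_plus s, Gamma_half_minus (r + s),
    Gamma_half_plus (r + s),
    Nat.cast_choose ℝ (by omega : 2 * r ≤ 2 * (r + s) + 1)]
  have hsub : 2 * (r + s) + 1 - 2 * r = 2 * s + 1 := by omega
  rw [hsub]
  have hπ : √π * √π = π := Real.mul_self_sqrt pi_nonneg
  have hπ0 : √π ≠ 0 := by positivity
  have hπ1 : (π : ℝ) ≠ 0 := pi_ne_zero
  have h1 := two_mul_sub_ne_three r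
  have h2 := two_mul_sub_ne_one r
  have hfr : (Nat.factorial r : ℝ) ≠ 0 := by positivity
  have hfs : (Nat.factorial s : ℝ) ≠ 0 := by positivity
  have hf2r : (Nat.factorial (2 * r) : ℝ) ≠ 0 := by positivity
  have hf2s : (Nat.factorial (2 * s + 1) : ℝ) ≠ 0 := by positivity
  have hfv : (Nat.factorial (2 * (r + s) + 1) : ℝ) ≠ 0 := by positivity
  have hfv2 : (Nat.factorial (2 * (r + s)) : ℝ) ≠ 0 := by positivity
  have hfrs : (Nat.factorial (r + s) : ℝ) ≠ 0 := by positivity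
  have h3 := two_mul_sub_ne_three (r + s)
  have h4 := two_mul_sub_ne_one (r + s)
  push_cast at h3 h4
  norm_num
  push_cast
  have h8 : ∀ m : ℕ, (8 : ℝ) ^ m = 2 ^ m * 2 ^ m * 2 ^ m := fun m => by
    rw [← mul_pow, ← mul_pow]; norm_num
  have h4' : ∀ m : ℕ, (4 : ℝ) ^ m = 2 ^ m * 2 ^ m := fun m => by
    rw [← mul_pow]; norm_num
  set t := √π with ht'
  have htne : t ≠ 0 := hπ0
  rw [show (π : ℝ) = t ^ 2 from (Real.sq_sqrt pi_nonneg).symm]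
  simp only [h8, h4']
  field_simp
  ring
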